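/- The true assignment maximizes the expected profile likelihood (Step 4 inequality): with P_{i,j} = θ⁰_{j,z⁰_i} for true assignments Z⁰, and for any assignment Z with class averages θ̄^Z_{j,a} = ∑_i Z_{i,a}P_{i,j}/n_a ∈ (0,1), one has ℓ̄(Z⁰) − ℓ̄(Z) = ∑_{i=1}^N ∑_{j=1}^J D(P_{i,j} ‖ θ̄^Z_{j,z_i}) ≥ 0, where ℓ̄(Z) = ∑_{i,j}[P_{i,j} log θ̄^Z_{j,z_i} + (1−P_{i,j}) log(1−θ̄^Z_{j,z_i})]. -/

import Mathlib

/-- Binary Kullback-Leibler divergence. -/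
noncomputable def klBin (p q : ℝ) : ℝ :=
  p * Real.log (p / q) + (1 - p) * Real.log ((1 - p) / (1 - q))

lemma klBin_nonneg {p q : ℝ} (hp : p ∈ Set.Ioo (0:ℝ) 1) (hq : q ∈ Set.Ioo (0:ℝ) 1) :
    0 ≤ klBin p q := by
  obtain ⟨hp0, hp1⟩ := hp
  obtain ⟨hq0, hq1⟩ := hq
  have hp1' : 0 < 1 - p := by linarith
  have hq1' : 0 < 1 - q := by linarith
  have h1 : Real.log (q / p) ≤ q / p - 1 :=
    Real.log_le_sub_one_of_pos (by positivity)
  have h2 : Real.log ((1 - q) / (1 - p)) ≤ (1 - q) / (1 - p) - 1 :=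
    Real.log_le_sub_one_of_pos (by positivity)
  have e1 : Real.log (p / q) = - Real.log (q / p) := by
    rw [Real.log_div hp0.ne' hq0.ne', Real.log_div hq0.ne' hp0.ne']; ring
  have e2 : Real.log ((1 - p) / (1 - q)) = - Real.log ((1 - q) / (1 - p)) := by
    rw [Real.log_div hp1'.ne' hq1'.ne', Real.log_div hq1'.ne' hp1'.ne']; ring
  have k1 : p * (q / p - 1) = q - p := by field_simp
  have k2 : (1 - p) * ((1 - q) / (1 - p) - 1) = p - q := by field_simp; ring
  unfold klBin
  rw [e1, e2]
  nlinarith [mul_le_mul_of_nonneg_left h1 hp0.le,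
    mul_le_mul_of_nonneg_left h2 hp1'.le]

theorem true_assignment_maximizes (N J L : ℕ)
    (θ0 : Fin J → Fin L → ℝ) (Z0 Z : Fin N → Fin L)
    (P : Fin N → Fin J → ℝ)
    (hPdef : ∀ i j, P i j = θ0 j (Z0 i))
    (hP : ∀ i j, P i j ∈ Set.Ioo (0 : ℝ) 1)
    (hn0 : ∀ a : Fin L, 0 < (Finset.univ.filter (fun i => Z0 i = a)).card)
    (hn : ∀ a : Fin L, 0 < (Finset.univ.filter (fun i => Z i = a)).card)
    (θbar0 θbar : Fin J → Fin L → ℝ)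
    (hθbar0 : ∀ j a, θbar0 j a =
      (∑ i ∈ Finset.univ.filter (fun i => Z0 i = a), P i j) /
        ((Finset.univ.filter (fun i => Z0 i = a)).card : ℝ))
    (hθbar : ∀ j a, θbar j a =
      (∑ i ∈ Finset.univ.filter (fun i => Z i = a), P i j) /
        ((Finset.univ.filter (fun i => Z i = a)).card : ℝ))
    (hbar01 : ∀ j a, θbar j a ∈ Set.Ioo (0 : ℝ) 1) :
    ((∑ i, ∑ j, (P i j * Real.log (θbar0 j (Z0 i))
        + (1 - P i j) * Real.log (1 - θbar0 j (Z0 i))))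
      - (∑ i, ∑ j, (P i j * Real.log (θbar j (Z i))
        + (1 - P i j) * Real.log (1 - θbar j (Z i))))
      = ∑ i, ∑ j, klBin (P i j) (θbar j (Z i))) ∧
    0 ≤ (∑ i, ∑ j, (P i j * Real.log (θbar0 j (Z0 i))
        + (1 - P i j) * Real.log (1 - θbar0 j (Z0 i))))
      - (∑ i, ∑ j, (P i j * Real.log (θbar j (Z i))
        + (1 - P i j) * Real.log (1 - θbar j (Z i)))) := by
  -- key fact: θbar0 j (Z0 i) = P i j
  have hkey : ∀ i j, θbar0 j (Z0 i) = P i j := by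
    intro i j
    rw [hθbar0]
    have hsum : ∑ m ∈ Finset.univ.filter (fun m => Z0 m = Z0 i), P m j
        = ((Finset.univ.filter (fun m => Z0 m = Z0 i)).card : ℝ) * P i j := by
      rw [Finset.sum_congr rfl (fun m hm => ?_), Finset.sum_const, nsmul_eq_mul]
      rw [hPdef m j, hPdef i j, (Finset.mem_filter.mp hm).2]
    rw [hsum]
    have hc : ((Finset.univ.filter (fun m => Z0 m = Z0 i)).card : ℝ) ≠ 0 := by
      exact_mod_cast (hn0 (Z0 i)).ne'
    field_simp
  have heq : (∑ i, ∑ j, (P i j * Real.log (θbar0 j (Z0 i))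
        + (1 - P i j) * Real.log (1 - θbar0 j (Z0 i))))
      - (∑ i, ∑ j, (P i j * Real.log (θbar j (Z i))
        + (1 - P i j) * Real.log (1 - θbar j (Z i))))
      = ∑ i, ∑ j, klBin (P i j) (θbar j (Z i)) := by
    rw [← Finset.sum_sub_distrib]
    refine Finset.sum_congr rfl fun i _ => ?_
    rw [← Finset.sum_sub_distrib]
    refine Finset.sum_congr rfl fun j _ => ?_
    rw [hkey i j]
    obtain ⟨hp0, hp1⟩ := hP i j
    obtain ⟨hq0, hq1⟩ := hbar01 j (Z i)
    unfold klBin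
    rw [Real.log_div hp0.ne' hq0.ne', Real.log_div (by linarith) (by linarith)]
    ring
  refine ⟨heq, heq ▸ ?_⟩
  exact Finset.sum_nonneg fun i _ => Finset.sum_nonneg fun j _ =>
    klBin_nonneg (hP i j) (hbar01 j (Z i))
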